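/- Let α : ℝ → ℝ be given by α(t) = t + 1, and let w be a continuous bounded positive function on ℝ for which there exist constants M, δ, K₁, K₂ > 0 with M − δ > 1 such that 1/M ≤ w(t) ≤ 1/(M−δ) for all t ≤ −K₁ and w(t) = 1 for all t ≥ K₂. Then the weighted composition operator T̃_{α,w} on C₀(ℝ), defined by T̃_{α,w}(f) = w·(f∘α), is topologically semi-transitive on C₀(ℝ) but is not topologically Cesàro hyper-transitive on C₀(ℝ). -/

import Mathlib

open scoped ZeroAtInfty
open Filter
set_option maxHeartbeats 1000000

lemma aux_tendsto_zero {ψ : ℝ → ℂ} (a b : ℝ)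
    (h : ∀ t, t ∉ Set.Icc a b → ψ t = 0) :
    Filter.Tendsto ψ (Filter.cocompact ℝ) (nhds 0) := by
  apply Filter.Tendsto.congr' _ tendsto_const_nhds
  rw [Filter.eventuallyEq_iff_exists_mem]
  exact ⟨(Set.Icc a b)ᶜ, Filter.mem_cocompact.mpr ⟨Set.Icc a b, isCompact_Icc, subset_rfl⟩,
    fun t ht => (h t ht).symm⟩

lemma aux_norm_le (h : C₀(ℝ, ℂ)) {C : ℝ} (hC : 0 ≤ C) (hb : ∀ t, ‖h t‖ ≤ C) : ‖h‖ ≤ C := by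
  rw [← ZeroAtInftyContinuousMap.norm_toBCF_eq_norm]
  exact (BoundedContinuousFunction.norm_le hC).mpr hb

lemma aux_apply_le (h : C₀(ℝ, ℂ)) (t : ℝ) : ‖h t‖ ≤ ‖h‖ :=
  le_trans (BoundedContinuousFunction.norm_coe_le_norm h.toBCF t)
    (le_of_eq ZeroAtInftyContinuousMap.norm_toBCF_eq_norm)

lemma aux_small_tail (h : C₀(ℝ, ℂ)) {ε : ℝ} (hε : 0 < ε) :
    ∃ R : ℝ, 0 < R ∧ ∀ t : ℝ, R < |t| → ‖h t‖ ≤ ε := by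
  have h1 : ∀ᶠ t in Filter.cocompact ℝ, ‖h t‖ < ε :=
    NormedAddCommGroup.tendsto_nhds_zero.mp h.zero_at_infty' ε hε
  rw [Filter.eventually_iff, Filter.mem_cocompact] at h1
  obtain ⟨K, hKc, hKsub⟩ := h1
  obtain ⟨r, hr⟩ := hKc.isBounded.subset_closedBall 0
  refine ⟨max r 1, lt_of_lt_of_le one_pos (le_max_right _ _), fun t ht => ?_⟩
  have htK : t ∉ K := by
    intro htK
    have := hr htK
    rw [Metric.mem_closedBall, Real.dist_eq, sub_zero] at this
    have : |t| ≤ max r 1 := le_trans this (le_max_left _ _)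
    linarith
  exact (hKsub htK).le


lemma aux_pow_apply (w : ℝ → ℝ) (T : C₀(ℝ, ℂ) →L[ℂ] C₀(ℝ, ℂ))
    (hT : ∀ (f : C₀(ℝ, ℂ)) (t : ℝ), T f t = (w t : ℂ) * f (t + 1)) :
    ∀ (n : ℕ) (f : C₀(ℝ, ℂ)) (t : ℝ),
      (T ^ n) f t = (∏ j ∈ Finset.range n, (w (t + j) : ℂ)) * f (t + n) := by
  intro n
  induction n with
  | zero => intro f t; simp
  | succ n ih =>
    intro f t
    rw [pow_succ', ContinuousLinearMap.mul_apply, hT, ih, Finset.prod_range_succ']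
    push_cast
    have h1 : ∀ j ∈ Finset.range n, (w (t + ((j : ℝ) + 1)) : ℂ) = (w (t + 1 + j) : ℂ) := by
      intro j _
      have : t + ((j : ℝ) + 1) = t + 1 + j := by ring
      rw [this]
    rw [Finset.prod_congr rfl h1]
    have h2 : t + (0 : ℝ) = t := by ring
    have h3 : t + ((n : ℝ) + 1) = t + 1 + n := by ring
    rw [h2, h3]
    ring

lemma aux_notcesaro (w : ℝ → ℝ) (K₂ : ℝ) (hK₂ : 0 < K₂)
    (hhigh : ∀ t ≥ K₂, w t = 1)
    (T : C₀(ℝ, ℂ) →L[ℂ] C₀(ℝ, ℂ))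
    (hpow : ∀ (n : ℕ) (f : C₀(ℝ, ℂ)) (t : ℝ),
      (T ^ n) f t = (∏ j ∈ Finset.range n, (w (t + j) : ℂ)) * f (t + n)) :
    ¬ (∀ O₁ O₂ : Set C₀(ℝ, ℂ), IsOpen O₁ → IsOpen O₂ → O₁.Nonempty → O₂.Nonempty →
    ∃ n : ℕ → ℕ, StrictMono n ∧ (∀ k, 1 ≤ n k) ∧
      ∀ k, ∃ f ∈ O₁, ((n k : ℂ))⁻¹ • (T ^ n k) f ∈ O₂) := by
  intro H
  -- bump function g with g K₂ = 3
  have hgc : Continuous fun t : ℝ => ((3 * max 0 (1 - |t - K₂|) : ℝ) : ℂ) := by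
    apply Continuous.comp Complex.continuous_ofReal
    fun_prop
  set g : C₀(ℝ, ℂ) :=
    ⟨⟨fun t => ((3 * max 0 (1 - |t - K₂|) : ℝ) : ℂ), hgc⟩, by
      apply aux_tendsto_zero (K₂ - 1) (K₂ + 1)
      intro t ht
      simp only [Set.mem_Icc, not_and_or, not_le] at ht
      have : 1 - |t - K₂| ≤ 0 := by
        rcases ht with h | h
        · have : 1 ≤ |t - K₂| := by rw [abs_sub_comm]; rw [le_abs]; left; linarith
          linarith
        · have : 1 ≤ |t - K₂| := by rw [le_abs]; left; linarith
          linarith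
      have : max 0 (1 - |t - K₂|) = 0 := max_eq_left this
      simp [this]⟩ with hg
  have hgK : g K₂ = 3 := by
    show ((3 * max 0 (1 - |K₂ - K₂|) : ℝ) : ℂ) = 3
    norm_num
  obtain ⟨n, -, hn1, hk⟩ := H (Metric.ball 0 1) (Metric.ball g 1) Metric.isOpen_ball
    Metric.isOpen_ball ⟨0, Metric.mem_ball_self one_pos⟩ ⟨g, Metric.mem_ball_self one_pos⟩
  obtain ⟨f, hf1, hf2⟩ := hk 0
  set N := n 0 with hN
  have hN1 : 1 ≤ N := hn1 0
  rw [Metric.mem_ball, dist_zero_right] at hf1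
  rw [Metric.mem_ball, dist_eq_norm] at hf2
  -- evaluate at K₂
  have hTN : (T ^ N) f K₂ = f (K₂ + N) := by
    rw [hpow]
    have : ∀ j ∈ Finset.range N, (w (K₂ + j) : ℂ) = 1 := by
      intro j _
      rw [hhigh (K₂ + j) (le_add_of_nonneg_right (Nat.cast_nonneg j))]
      norm_num
    rw [Finset.prod_congr rfl this]
    simp
  have heval : ‖((N : ℂ)⁻¹ • (T ^ N) f - g) K₂‖ ≤ ‖(N : ℂ)⁻¹ • (T ^ N) f - g‖ :=
    aux_apply_le _ _
  have hsub : ((N : ℂ)⁻¹ • (T ^ N) f - g) K₂ = (N : ℂ)⁻¹ * f (K₂ + N) - 3 := by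
    rw [ZeroAtInftyContinuousMap.coe_sub, Pi.sub_apply, ZeroAtInftyContinuousMap.coe_smul,
      Pi.smul_apply, hTN, hgK, smul_eq_mul]
  have hsmall : ‖(N : ℂ)⁻¹ * f (K₂ + N)‖ < 1 := by
    rw [norm_mul]
    have h1 : ‖(N : ℂ)⁻¹‖ ≤ 1 := by
      rw [norm_inv, Complex.norm_natCast]
      rw [inv_le_one_iff₀]
      right; exact_mod_cast hN1
    have h2 : ‖f (K₂ + N)‖ < 1 := lt_of_le_of_lt (aux_apply_le f _) hf1
    calc ‖(N : ℂ)⁻¹‖ * ‖f (K₂ + N)‖ ≤ 1 * ‖f (K₂ + N)‖ := by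
          apply mul_le_mul_of_nonneg_right h1 (norm_nonneg _)
      _ < 1 := by rwa [one_mul]
  have h3 : (3 : ℝ) = ‖(3 : ℂ)‖ := by norm_num
  have htri := norm_sub_norm_le (3 : ℂ) ((N : ℂ)⁻¹ * f (K₂ + N))
  rw [norm_sub_rev] at htri
  rw [hsub] at heval
  have hlt : ‖(N : ℂ)⁻¹ * f (K₂ + N) - 3‖ < 1 := lt_of_le_of_lt heval hf2
  rw [← h3] at htri
  linarith

lemma aux_semitransitive (w : ℝ → ℝ) (hw_cont : Continuous w) (hw_pos : ∀ t, 0 < w t)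
    (hw_bdd : ∃ C, ∀ t, w t ≤ C)
    (M δ K₁ K₂ : ℝ) (hM : 0 < M) (hδ : 0 < δ) (hK₁ : 0 < K₁) (hK₂ : 0 < K₂)
    (hMδ : 1 < M - δ)
    (hlow : ∀ t ≤ -K₁, 1 / M ≤ w t ∧ w t ≤ 1 / (M - δ))
    (hhigh : ∀ t ≥ K₂, w t = 1)
    (T : C₀(ℝ, ℂ) →L[ℂ] C₀(ℝ, ℂ))
    (hpow : ∀ (n : ℕ) (f : C₀(ℝ, ℂ)) (t : ℝ),
      (T ^ n) f t = (∏ j ∈ Finset.range n, (w (t + j) : ℂ)) * f (t + n)) :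
    ∀ O₁ O₂ : Set C₀(ℝ, ℂ), IsOpen O₁ → IsOpen O₂ → O₁.Nonempty → O₂.Nonempty →
    ∃ (n : ℕ) (lam : ℂ), 1 ≤ n ∧ lam ≠ 0 ∧ ∃ f ∈ O₁, lam • (T ^ n) f ∈ O₂ := by
  classical
  intro O₁ O₂ hO₁ hO₂ hne₁ hne₂
  obtain ⟨f₀, hf₀⟩ := hne₁
  obtain ⟨g₀, hg₀⟩ := hne₂
  obtain ⟨ε₁, hε₁, hball₁⟩ := Metric.isOpen_iff.mp hO₁ f₀ hf₀
  obtain ⟨ε₂, hε₂, hball₂⟩ := Metric.isOpen_iff.mp hO₂ g₀ hg₀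
  set ε := min ε₁ ε₂ with hεdef
  have hε : 0 < ε := lt_min hε₁ hε₂
  have hε4 : 0 < ε / 4 := by linarith
  obtain ⟨R₁, hR₁pos, hR₁⟩ := aux_small_tail f₀ hε4
  obtain ⟨R₂, hR₂pos, hR₂⟩ := aux_small_tail g₀ hε4
  set R : ℝ := max (max R₁ R₂) (max K₁ K₂) with hRdef
  have hRpos : 0 < R := lt_of_lt_of_le hR₁pos (le_trans (le_max_left _ _) (le_max_left _ _))
  have hRR₁ : R₁ ≤ R := le_trans (le_max_left _ _) (le_max_left _ _)
  have hRR₂ : R₂ ≤ R := le_trans (le_max_right _ _) (le_max_left _ _)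
  have hRK₁ : K₁ ≤ R := le_trans (le_max_left _ _) (le_max_right _ _)
  have hRK₂ : K₂ ≤ R := le_trans (le_max_right _ _) (le_max_right _ _)
  -- cutoff function
  set φ : ℝ → ℝ := fun t => max 0 (min 1 (R + 1 - |t|)) with hφdef
  have hφc : Continuous φ := by fun_prop
  have hφ0 : ∀ t, 0 ≤ φ t := fun t => le_max_left _ _
  have hφ1 : ∀ t, φ t ≤ 1 := fun t => max_le zero_le_one (min_le_left _ _)
  have hφeq1 : ∀ t : ℝ, |t| ≤ R → φ t = 1 := by
    intro t ht
    have : min 1 (R + 1 - |t|) = 1 := min_eq_left (by linarith)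
    rw [hφdef]; simp only [this]; exact max_eq_right zero_le_one
  have hφeq0 : ∀ t : ℝ, R + 1 ≤ |t| → φ t = 0 := by
    intro t ht
    have h1 : min 1 (R + 1 - |t|) ≤ 0 := le_trans (min_le_right _ _) (by linarith)
    rw [hφdef]; exact max_eq_left h1
  -- truncations
  set f₁ : C₀(ℝ, ℂ) := ⟨⟨fun t => (φ t : ℂ) * f₀ t, by fun_prop⟩, by
    apply aux_tendsto_zero (-(R + 1)) (R + 1)
    intro t ht
    have habs : R + 1 ≤ |t| := by
      simp only [Set.mem_Icc, not_and_or, not_le] at ht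
      rcases ht with h | h
      · rw [abs_of_neg (by linarith)]; linarith
      · rw [abs_of_pos (by linarith)]; linarith
    simp [hφeq0 t habs]⟩ with hf₁def
  set g₁ : C₀(ℝ, ℂ) := ⟨⟨fun t => (φ t : ℂ) * g₀ t, by fun_prop⟩, by
    apply aux_tendsto_zero (-(R + 1)) (R + 1)
    intro t ht
    have habs : R + 1 ≤ |t| := by
      simp only [Set.mem_Icc, not_and_or, not_le] at ht
      rcases ht with h | h
      · rw [abs_of_neg (by linarith)]; linarith
      · rw [abs_of_pos (by linarith)]; linarith
    simp [hφeq0 t habs]⟩ with hg₁def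
  have hf₁app : ∀ t, f₁ t = (φ t : ℂ) * f₀ t := fun t => rfl
  have hg₁app : ∀ t, g₁ t = (φ t : ℂ) * g₀ t := fun t => rfl
  have htrunc : ∀ (h₀ : C₀(ℝ, ℂ)), (∀ t : ℝ, R < |t| → ‖h₀ t‖ ≤ ε / 4) →
      ∀ t : ℝ, ‖(φ t : ℂ) * h₀ t - h₀ t‖ ≤ ε / 4 := by
    intro h₀ hsm t
    have : (φ t : ℂ) * h₀ t - h₀ t = ((φ t : ℝ) - 1 : ℝ) * h₀ t := by
      push_cast; ring
    rw [this, norm_mul, Complex.norm_real]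
    rcases le_or_gt |t| R with h | h
    · rw [hφeq1 t h]; simp only [sub_self, norm_zero, zero_mul]; positivity
    · have h1 : |φ t - 1| ≤ 1 := by
        rw [abs_le]; constructor <;> linarith [hφ0 t, hφ1 t]
      calc ‖(φ t - 1 : ℝ)‖ * ‖h₀ t‖ ≤ 1 * (ε / 4) := by
            apply mul_le_mul h1 (hsm t h) (norm_nonneg _) zero_le_one
        _ = ε / 4 := one_mul _
  have hf₁near : ‖f₁ - f₀‖ ≤ ε / 4 := by
    apply aux_norm_le _ hε4.le
    intro t
    rw [ZeroAtInftyContinuousMap.coe_sub]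
    exact htrunc f₀ (fun t ht => hR₁ t (lt_of_le_of_lt hRR₁ ht)) t
  have hg₁near : ‖g₁ - g₀‖ ≤ ε / 4 := by
    apply aux_norm_le _ hε4.le
    intro t
    rw [ZeroAtInftyContinuousMap.coe_sub]
    exact htrunc g₀ (fun t ht => hR₂ t (lt_of_le_of_lt hRR₂ ht)) t
  have hf₁supp : ∀ t : ℝ, R + 1 < |t| → f₁ t = 0 := by
    intro t ht; rw [hf₁app, hφeq0 t ht.le]; simp
  have hg₁supp : ∀ t : ℝ, R + 1 < |t| → g₁ t = 0 := by
    intro t ht; rw [hg₁app, hφeq0 t ht.le]; simp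
  -- constants
  obtain ⟨C, hC⟩ := hw_bdd
  set W : ℝ := max C 1 with hWdef
  have hW1 : 1 ≤ W := le_max_right _ _
  have hwW : ∀ t, w t ≤ W := fun t => le_trans (hC t) (le_max_left _ _)
  set r : ℝ := 1 / (M - δ) with hrdef
  have hMδ0 : 0 < M - δ := by linarith
  have hr0 : 0 < r := by positivity
  have hr1 : r < 1 := by rw [hrdef, div_lt_one hMδ0]; exact hMδ
  have hwr : ∀ t ≤ -K₁, w t ≤ r := fun t ht => (hlow t ht).2
  -- lower bound m on the compact window
  have hIcc_ne : (Set.Icc (-(R + 1)) K₂).Nonempty := ⟨0, by constructor <;> linarith⟩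
  obtain ⟨x₀, hx₀mem, hx₀min⟩ := isCompact_Icc.exists_isMinOn hIcc_ne hw_cont.continuousOn
  set m : ℝ := min (w x₀) 1 with hmdef
  have hm0 : 0 < m := lt_min (hw_pos x₀) one_pos
  have hm1 : m ≤ 1 := min_le_right _ _
  have hmw : ∀ s ∈ Set.Icc (-(R + 1)) K₂, m ≤ w s := fun s hs =>
    le_trans (min_le_left _ _) (hx₀min hs)
  set N₀ : ℕ := ⌈K₁ + R + 2⌉₊ with hN₀def
  set N₁ : ℕ := ⌈K₂ + R + 2⌉₊ with hN₁def
  have hN₀ge : K₁ + R + 2 ≤ (N₀ : ℝ) := Nat.le_ceil _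
  have hN₁ge : K₂ + R + 2 ≤ (N₁ : ℝ) := Nat.le_ceil _
  set m' : ℝ := m ^ N₁ with hm'def
  have hm'0 : 0 < m' := pow_pos hm0 _
  -- lower bound for the weight products on the support window
  have hProdLow : ∀ (n : ℕ) (s : ℝ), -(R + 1) ≤ s → s ≤ R + 1 →
      m' ≤ ∏ j ∈ Finset.range n, w (s + (j : ℝ)) := by
    intro n s hs1 hs2
    rw [← Finset.prod_filter_mul_prod_filter_not (Finset.range n) (fun j : ℕ => s + (j : ℝ) < K₂)]
    have hBprod : (∏ j ∈ (Finset.range n).filter (fun j : ℕ => ¬ s + (j : ℝ) < K₂), w (s + (j : ℝ))) = 1 :=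
      Finset.prod_eq_one fun j hj => hhigh _ (not_lt.mp (Finset.mem_filter.mp hj).2)
    rw [hBprod, mul_one]
    set A := (Finset.range n).filter (fun j : ℕ => s + (j : ℝ) < K₂) with hAdef
    have hAcard : A.card ≤ N₁ := by
      have hsub : A ⊆ Finset.range N₁ := by
        intro j hj
        obtain ⟨hj1, hj2⟩ := Finset.mem_filter.mp hj
        rw [Finset.mem_range]
        have : (j : ℝ) < K₂ - s := by linarith
        have : (j : ℝ) < (N₁ : ℝ) := by linarith
        exact_mod_cast this
      calc A.card ≤ (Finset.range N₁).card := Finset.card_le_card hsub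
        _ = N₁ := Finset.card_range _
    calc m' = m ^ N₁ := rfl
      _ ≤ m ^ A.card := pow_le_pow_of_le_one hm0.le hm1 hAcard
      _ = ∏ _j ∈ A, m := (Finset.prod_const m).symm
      _ ≤ ∏ j ∈ A, w (s + (j : ℝ)) := by
          apply Finset.prod_le_prod (fun j _ => hm0.le)
          intro j hj
          obtain ⟨hj1, hj2⟩ := Finset.mem_filter.mp hj
          apply hmw
          constructor
          · have : (0 : ℝ) ≤ (j : ℝ) := Nat.cast_nonneg j
            linarith
          · linarith
  -- upper bound for the weight product when t + n lies in the support window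
  have hProdHigh : ∀ (n : ℕ), N₀ ≤ n → ∀ t : ℝ, t ≤ R + 1 - n →
      (∏ j ∈ Finset.range n, w (t + (j : ℝ))) ≤ W ^ N₀ * r ^ (n - N₀) := by
    intro n hn t ht
    rw [← Finset.prod_filter_mul_prod_filter_not (Finset.range n) (fun j : ℕ => t + (j : ℝ) ≤ -K₁)]
    set A := (Finset.range n).filter (fun j : ℕ => t + (j : ℝ) ≤ -K₁) with hAdef
    set B := (Finset.range n).filter (fun j : ℕ => ¬ t + (j : ℝ) ≤ -K₁) with hBdef
    have hcards : A.card + B.card = n := by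
      rw [hAdef, hBdef, Finset.card_filter_add_card_filter_not, Finset.card_range]
    have hBcard : B.card ≤ N₀ := by
      have hsub : B ⊆ Finset.Ico (n - N₀) n := by
        intro j hj
        obtain ⟨hj1, hj2⟩ := Finset.mem_filter.mp hj
        rw [Finset.mem_range] at hj1
        rw [Finset.mem_Ico]
        refine ⟨?_, hj1⟩
        have h1 : -K₁ < t + (j : ℝ) := by push_neg at hj2; exact hj2
        have h2 : (n : ℝ) < (j : ℝ) + (N₀ : ℝ) := by linarith
        have h3 : n < j + N₀ := by exact_mod_cast h2
        omega
      calc B.card ≤ (Finset.Ico (n - N₀) n).card := Finset.card_le_card hsub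
        _ = n - (n - N₀) := Nat.card_Ico _ _
        _ ≤ N₀ := by omega
    have hA : (∏ j ∈ A, w (t + (j : ℝ))) ≤ r ^ (n - N₀) := by
      calc (∏ j ∈ A, w (t + (j : ℝ))) ≤ ∏ _j ∈ A, r :=
            Finset.prod_le_prod (fun j _ => (hw_pos _).le)
              (fun j hj => hwr _ (Finset.mem_filter.mp hj).2)
        _ = r ^ A.card := Finset.prod_const r
        _ ≤ r ^ (n - N₀) := pow_le_pow_of_le_one hr0.le hr1.le (by omega)
    have hB : (∏ j ∈ B, w (t + (j : ℝ))) ≤ W ^ N₀ := by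
      calc (∏ j ∈ B, w (t + (j : ℝ))) ≤ ∏ _j ∈ B, W :=
            Finset.prod_le_prod (fun j _ => (hw_pos _).le) (fun j _ => hwW _)
        _ = W ^ B.card := Finset.prod_const W
        _ ≤ W ^ N₀ := pow_le_pow_right₀ hW1 hBcard
    calc (∏ j ∈ A, w (t + (j : ℝ))) * ∏ j ∈ B, w (t + (j : ℝ))
        ≤ r ^ (n - N₀) * W ^ N₀ := by
          apply mul_le_mul hA hB (Finset.prod_nonneg fun j _ => (hw_pos _).le) (by positivity)
      _ = W ^ N₀ * r ^ (n - N₀) := mul_comm _ _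
  -- norm bound for T^n f₁
  have hTnf₁ : ∀ n : ℕ, N₀ ≤ n → ‖(T ^ n) f₁‖ ≤ W ^ N₀ * r ^ (n - N₀) * ‖f₁‖ := by
    intro n hn
    apply aux_norm_le _ (by positivity)
    intro t
    rw [hpow]
    rw [norm_mul, ← Complex.ofReal_prod, Complex.norm_real, Real.norm_eq_abs]
    rcases le_or_gt |t + (n : ℝ)| (R + 1) with h | h
    · have ht : t ≤ R + 1 - n := by
        have := (abs_le.mp h).2; linarith
      have h1 : |∏ j ∈ Finset.range n, w (t + j)| = ∏ j ∈ Finset.range n, w (t + j) :=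
        abs_of_nonneg (Finset.prod_nonneg fun j _ => (hw_pos _).le)
      rw [h1]
      apply mul_le_mul (hProdHigh n hn t ht) (aux_apply_le f₁ _) (norm_nonneg _) (by positivity)
    · rw [hf₁supp _ h]
      simp only [norm_zero, mul_zero]
      positivity
  -- choose lambda and n
  set Bc : ℝ := ‖g₁‖ / m' + 1 with hBcdef
  have hBc0 : 0 < Bc := by positivity
  set lr : ℝ := 4 * Bc / ε with hlrdef
  have hlr0 : 0 < lr := by positivity
  have htarget : 0 < ε / (2 * lr) := by positivity
  have hrtend : Tendsto (fun k : ℕ => W ^ N₀ * ‖f₁‖ * r ^ k) atTop (nhds 0) := by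
    have h0 := tendsto_pow_atTop_nhds_zero_of_lt_one hr0.le hr1
    have := h0.const_mul (W ^ N₀ * ‖f₁‖)
    simpa using this
  obtain ⟨k, hk⟩ := ((eventually_ge_atTop 1).and
    (hrtend.eventually_lt_const htarget)).exists
  obtain ⟨hk1, hkε⟩ := hk
  set n : ℕ := N₀ + k with hndef
  have hn1 : 1 ≤ n := by omega
  have hnN₀ : N₀ ≤ n := by omega
  have hnsub : n - N₀ = k := by omega
  -- the product function
  set P : ℝ → ℝ := fun s => ∏ j ∈ Finset.range n, w (s + (j : ℝ)) with hPdef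
  have hPc : Continuous P := by
    apply continuous_finset_prod
    intro j _
    exact hw_cont.comp (by fun_prop)
  have hPpos : ∀ s, 0 < P s := fun s => Finset.prod_pos fun j _ => hw_pos _
  have hPne : ∀ s, ((P s : ℝ) : ℂ) ≠ 0 := fun s => by
    exact_mod_cast Complex.ofReal_ne_zero.mpr (hPpos s).ne'
  -- the "backward" element u
  set u : C₀(ℝ, ℂ) := ⟨⟨fun t => g₁ (t - n) / ((P (t - n) : ℝ) : ℂ), by
    apply Continuous.div
    · exact (map_continuous g₁).comp (by fun_prop)
    · exact Complex.continuous_ofReal.comp (hPc.comp (by fun_prop))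
    · intro t; exact hPne _⟩, by
    apply aux_tendsto_zero (-(R + 1) + n) (R + 1 + n)
    intro t ht
    have habs : R + 1 < |t - n| := by
      simp only [Set.mem_Icc, not_and_or, not_le] at ht
      rcases ht with h | h
      · rw [abs_of_neg (by linarith)]; linarith
      · rw [abs_of_pos (by linarith)]; linarith
    show g₁ (t - n) / ((P (t - n) : ℝ) : ℂ) = 0
    rw [hg₁supp _ habs, zero_div]⟩ with hudef
  have huapp : ∀ t, u t = g₁ (t - n) / ((P (t - n) : ℝ) : ℂ) := fun t => rfl
  have hu_bound : ∀ t, ‖u t‖ ≤ ‖g₁‖ / m' := by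
    intro t
    rw [huapp, norm_div, Complex.norm_real, Real.norm_eq_abs, abs_of_pos (hPpos _)]
    rcases le_or_gt |t - (n : ℝ)| (R + 1) with h | h
    · have h1 := abs_le.mp h
      apply div_le_div₀ (by positivity) (aux_apply_le g₁ _) hm'0
      exact hProdLow n (t - n) (by linarith [h1.1]) h1.2
    · rw [hg₁supp _ h, norm_zero, zero_div]
      positivity
  have hu_norm : ‖u‖ ≤ ‖g₁‖ / m' := aux_norm_le _ (by positivity) hu_bound
  have hTu : ∀ t, (T ^ n) u t = g₁ t := by
    intro t
    rw [hpow, huapp]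
    have h1 : t + (n : ℝ) - n = t := by ring
    rw [h1]
    rw [← Complex.ofReal_prod]
    exact mul_div_cancel₀ _ (hPne t)
  -- assemble
  set lam : ℂ := (lr : ℂ) with hlamdef
  have hlam0 : lam ≠ 0 := Complex.ofReal_ne_zero.mpr hlr0.ne'
  set f : C₀(ℝ, ℂ) := f₁ + lam⁻¹ • u with hfdef
  have hlamnorm : ‖lam‖ = lr := by rw [hlamdef, Complex.norm_real, Real.norm_eq_abs,
    abs_of_pos hlr0]
  have hlaminv : ‖lam⁻¹‖ = lr⁻¹ := by rw [norm_inv, hlamnorm]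
  refine ⟨n, lam, hn1, hlam0, f, ?_, ?_⟩
  · -- f ∈ O₁
    apply hball₁
    rw [Metric.mem_ball, dist_eq_norm]
    have h1 : f - f₀ = (f₁ - f₀) + lam⁻¹ • u := by rw [hfdef]; abel
    have h2 : ‖lam⁻¹ • u‖ ≤ lr⁻¹ * (‖g₁‖ / m') := by
      apply aux_norm_le _ (by positivity)
      intro t
      rw [ZeroAtInftyContinuousMap.coe_smul]
      simp only [Pi.smul_apply, smul_eq_mul]
      rw [norm_mul, norm_inv, hlamnorm]
      exact mul_le_mul_of_nonneg_left (hu_bound t) (by positivity)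
    have h3 : lr⁻¹ * (‖g₁‖ / m') ≤ lr⁻¹ * Bc := by
      apply mul_le_mul_of_nonneg_left _ (by positivity)
      rw [hBcdef]; linarith
    have h4 : lr⁻¹ * Bc = ε / 4 := by
      rw [hlrdef]
      field_simp
    have h5 : ‖f - f₀‖ ≤ ε / 4 + ε / 4 := by
      rw [h1]
      calc ‖(f₁ - f₀) + lam⁻¹ • u‖ ≤ ‖f₁ - f₀‖ + ‖lam⁻¹ • u‖ := norm_add_le _ _
        _ ≤ ε / 4 + ε / 4 := by
            apply add_le_add hf₁near
            calc ‖lam⁻¹ • u‖ ≤ lr⁻¹ * (‖g₁‖ / m') := h2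
              _ ≤ lr⁻¹ * Bc := h3
              _ = ε / 4 := h4
    have : ε ≤ ε₁ := min_le_left _ _
    linarith
  · -- lam • (T^n) f ∈ O₂
    apply hball₂
    rw [Metric.mem_ball, dist_eq_norm]
    have hexp : lam • (T ^ n) f = lam • (T ^ n) f₁ + g₁ := by
      have hTf : (T ^ n) f = (T ^ n) f₁ + lam⁻¹ • (T ^ n) u := by
        rw [hfdef, map_add, map_smul]
      apply DFunLike.ext
      intro t
      rw [hTf]
      simp only [ZeroAtInftyContinuousMap.coe_add, ZeroAtInftyContinuousMap.coe_smul,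
        Pi.add_apply, Pi.smul_apply, smul_eq_mul]
      rw [hTu t, mul_add, ← mul_assoc, mul_inv_cancel₀ hlam0, one_mul]
    have h6 : ‖(T ^ n) f₁‖ < ε / (2 * lr) := by
      calc ‖(T ^ n) f₁‖ ≤ W ^ N₀ * r ^ (n - N₀) * ‖f₁‖ := hTnf₁ n hnN₀
        _ = W ^ N₀ * ‖f₁‖ * r ^ k := by rw [hnsub]; ring
        _ < ε / (2 * lr) := hkε
    have h7a : ‖lam • (T ^ n) f₁‖ ≤ lr * ‖(T ^ n) f₁‖ := by
      apply aux_norm_le _ (by positivity)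
      intro t
      rw [ZeroAtInftyContinuousMap.coe_smul]
      simp only [Pi.smul_apply, smul_eq_mul]
      rw [norm_mul, hlamnorm]
      exact mul_le_mul_of_nonneg_left (aux_apply_le _ t) hlr0.le
    have h7 : ‖lam • (T ^ n) f₁‖ < ε / 2 := by
      apply lt_of_le_of_lt h7a
      calc lr * ‖(T ^ n) f₁‖ < lr * (ε / (2 * lr)) := by
            apply mul_lt_mul_of_pos_left h6 hlr0
        _ = ε / 2 := by
            field_simp
    have h8 : lam • (T ^ n) f - g₀ = lam • (T ^ n) f₁ + (g₁ - g₀) := by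
      rw [hexp]; abel
    have h9 : ‖lam • (T ^ n) f - g₀‖ < ε / 2 + ε / 4 := by
      rw [h8]
      calc ‖lam • (T ^ n) f₁ + (g₁ - g₀)‖ ≤ ‖lam • (T ^ n) f₁‖ + ‖g₁ - g₀‖ := norm_add_le _ _
        _ < ε / 2 + ε / 4 := by
            apply add_lt_add_of_lt_of_le h7 hg₁near
    have : ε ≤ ε₂ := min_le_right _ _
    linarith


/-- A bounded linear operator `T` on a complex normed space is *topologically
semi-transitive* if for every pair of nonempty open subsets `O₁, O₂` there exist
`n ∈ ℕ` and `λ ∈ ℂ \ {0}` such that `λ • T^n(O₁) ∩ O₂ ≠ ∅`. -/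
def IsSemiTransitive {E : Type*} [NormedAddCommGroup E] [NormedSpace ℂ E]
    (T : E →L[ℂ] E) : Prop :=
  ∀ O₁ O₂ : Set E, IsOpen O₁ → IsOpen O₂ → O₁.Nonempty → O₂.Nonempty →
    ∃ (n : ℕ) (lam : ℂ), 1 ≤ n ∧ lam ≠ 0 ∧ ∃ f ∈ O₁, lam • (T ^ n) f ∈ O₂

/-- A bounded linear operator `T` on a complex normed space is *topologically Cesàro
hyper-transitive* if for every pair of nonempty open subsets `O₁, O₂` there exists a
strictly increasing sequence `(n_k)` of (positive) natural numbers such that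
`n_k⁻¹ • T^{n_k}(O₁) ∩ O₂ ≠ ∅` for all `k`. -/
def IsCesaroHyperTransitive {E : Type*} [NormedAddCommGroup E] [NormedSpace ℂ E]
    (T : E →L[ℂ] E) : Prop :=
  ∀ O₁ O₂ : Set E, IsOpen O₁ → IsOpen O₂ → O₁.Nonempty → O₂.Nonempty →
    ∃ n : ℕ → ℕ, StrictMono n ∧ (∀ k, 1 ≤ n k) ∧
      ∀ k, ∃ f ∈ O₁, ((n k : ℂ))⁻¹ • (T ^ n k) f ∈ O₂

theorem semi_transitive_not_cesaro_of_weight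
    (w : ℝ → ℝ) (hw_cont : Continuous w) (hw_pos : ∀ t, 0 < w t)
    (hw_bdd : ∃ C, ∀ t, w t ≤ C)
    (M δ K₁ K₂ : ℝ) (hM : 0 < M) (hδ : 0 < δ) (hK₁ : 0 < K₁) (hK₂ : 0 < K₂)
    (hMδ : 1 < M - δ)
    (hlow : ∀ t ≤ -K₁, 1 / M ≤ w t ∧ w t ≤ 1 / (M - δ))
    (hhigh : ∀ t ≥ K₂, w t = 1)
    (T : C₀(ℝ, ℂ) →L[ℂ] C₀(ℝ, ℂ))
    (hT : ∀ (f : C₀(ℝ, ℂ)) (t : ℝ), T f t = (w t : ℂ) * f (t + 1)) :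
    IsSemiTransitive T ∧ ¬ IsCesaroHyperTransitive T := by
  have hpow := aux_pow_apply w T hT
  exact ⟨aux_semitransitive w hw_cont hw_pos hw_bdd M δ K₁ K₂ hM hδ hK₁ hK₂ hMδ hlow hhigh T hpow,
    aux_notcesaro w K₂ hK₂ hhigh T hpow⟩
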